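/- (Extended SSSI constraint implies restricted TU.) Let w be a 0-1 matrix with r rows and m columns. Suppose there exist a natural number l, a map g : Fin r → Fin l assigning each row to a group, and pairwise disjoint sets S₁, …, S_l ⊆ Fin m, such that for all row indices k and column indices j: w_{k j} = 1 if and only if j ∈ S_{g(k)}. Then w is restrictedly TU. -/

import Mathlib

/-- A matrix is totally unimodular if every square submatrix has determinant `0`, `1`, or `-1`. -/
def IsTU {α β : Type*} (A : Matrix α β ℤ) : Prop :=
  ∀ (k : ℕ) (f : Fin k → α) (g : Fin k → β),
    Function.Injective f → Function.Injective g →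
      (A.submatrix f g).det = 0 ∨ (A.submatrix f g).det = 1 ∨ (A.submatrix f g).det = -1

/-- A 0-1 matrix `w` is restrictedly TU if the matrix obtained by appending the all-ones row
to `w` is totally unimodular. -/
def RestrictedTU {r m : ℕ} (w : Matrix (Fin r) (Fin m) ℤ) : Prop :=
  IsTU (Matrix.fromRows w (Matrix.of fun (_ : Unit) (_ : Fin m) => (1 : ℤ)))


/-- Sum of 0-1 values with at most one 1 is 0 or 1. -/
lemma sum01 {ι : Type*} (s : Finset ι) (v : ι → ℤ)
    (h01 : ∀ i ∈ s, v i = 0 ∨ v i = 1)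
    (huniq : ∀ i ∈ s, ∀ i' ∈ s, v i = 1 → v i' = 1 → i = i') :
    (∑ i ∈ s, v i) = 0 ∨ (∑ i ∈ s, v i) = 1 := by
  classical
  induction s using Finset.induction_on with
  | empty => simp
  | @insert a s ha ih =>
    rw [Finset.sum_insert ha]
    rcases h01 a (Finset.mem_insert_self a s) with h0 | h1
    · rw [h0, zero_add]
      exact ih (fun i hi => h01 i (Finset.mem_insert_of_mem hi))
        (fun i hi i' hi' => huniq i (Finset.mem_insert_of_mem hi) i' (Finset.mem_insert_of_mem hi'))
    · have hz : ∀ i ∈ s, v i = 0 := by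
        intro i hi
        rcases h01 i (Finset.mem_insert_of_mem hi) with h | h
        · exact h
        · exact absurd (huniq i (Finset.mem_insert_of_mem hi) a (Finset.mem_insert_self a s) h h1)
            (fun he => ha (he ▸ hi))
      rw [h1, Finset.sum_eq_zero hz]
      right; rfl

/-- A square 0-1 matrix with pairwise disjoint row supports has determinant 0, 1, or -1. -/
lemma detLemma {n : ℕ} (M : Matrix (Fin n) (Fin n) ℤ)
    (h01 : ∀ i j, M i j = 0 ∨ M i j = 1)
    (hdisj : ∀ i i', i ≠ i' → ∀ j, M i j = 0 ∨ M i' j = 0) :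
    M.det = 0 ∨ M.det = 1 ∨ M.det = -1 := by
  classical
  by_cases hc : ∃ j, ∀ i, M i j = 0
  · obtain ⟨j, hj⟩ := hc
    exact Or.inl (Matrix.det_eq_zero_of_column_eq_zero j hj)
  by_cases hr : ∃ i, ∀ j, M i j = 0
  · obtain ⟨i, hi⟩ := hr
    exact Or.inl (Matrix.det_eq_zero_of_row_eq_zero i hi)
  push_neg at hc hr
  -- for each column choose the unique row with a 1
  have hex : ∀ j, ∃ i, M i j = 1 := by
    intro j
    obtain ⟨i, hi⟩ := hc j
    exact ⟨i, (h01 i j).resolve_left hi⟩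
  choose p hp using hex
  have huniq : ∀ i j, M i j = 1 → i = p j := by
    intro i j hij
    by_contra hne
    rcases hdisj i (p j) hne j with h | h
    · rw [hij] at h; exact one_ne_zero h
    · rw [hp j] at h; exact one_ne_zero h
  have hsurj : Function.Surjective p := by
    intro i
    obtain ⟨j, hj⟩ := hr i
    have hj1 : M i j = 1 := (h01 i j).resolve_left hj
    exact ⟨j, (huniq i j hj1).symm⟩
  have hbij : Function.Bijective p := ⟨Finite.injective_iff_surjective.mpr hsurj, hsurj⟩
  let σ : Equiv.Perm (Fin n) := Equiv.ofBijective p hbij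
  have hM : M.transpose = σ.permMatrix ℤ := by
    ext j i
    simp only [Matrix.transpose_apply, PEquiv.toMatrix_apply, Equiv.toPEquiv_apply,
      Option.mem_def, Option.some.injEq]
    have hσj : σ j = p j := rfl
    by_cases h : σ j = i
    · rw [if_pos h, ← h, hσj, hp j]
    · rw [if_neg h]
      rcases h01 i j with h0 | h1
      · exact h0
      · exact absurd ((huniq i j h1).symm) (fun he => h (hσj.trans he))
  have : M.det = ((Equiv.Perm.sign σ : ℤˣ) : ℤ) := by
    rw [← Matrix.det_transpose, hM, Matrix.det_permutation]
    push_cast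
    rfl
  rcases Int.units_eq_one_or (Equiv.Perm.sign σ) with h | h <;>
    rw [this, h] <;> simp

lemma det_updateRow_finsetSum {n : ℕ} (A : Matrix (Fin n) (Fin n) ℤ) (i0 : Fin n)
    {ι : Type*} (s : Finset ι) (v : ι → Fin n → ℤ) :
    (A.updateRow i0 (∑ x ∈ s, v x)).det = ∑ x ∈ s, (A.updateRow i0 (v x)).det := by
  classical
  induction s using Finset.induction_on with
  | empty =>
    rw [Finset.sum_empty, Finset.sum_empty]
    exact Matrix.det_eq_zero_of_row_eq_zero i0 (fun j => by simp)
  | @insert a s ha ih =>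
    rw [Finset.sum_insert ha, Finset.sum_insert ha, Matrix.det_updateRow_add, ih]

/-- Extended SSSI constraint implies restricted TU: if the rows of the 0-1 matrix `w` are
assigned to groups by `g` and there are pairwise disjoint column sets `S a` such that
`w_{k j} = 1` iff `j ∈ S (g k)`, then `w` is restrictedly TU. -/
theorem restrictedTU_of_extendedSSSI {r m : ℕ} (w : Matrix (Fin r) (Fin m) ℤ)
    (h01 : ∀ i j, w i j = 0 ∨ w i j = 1)
    (l : ℕ) (g : Fin r → Fin l) (S : Fin l → Finset (Fin m))
    (hdisj : ∀ a b : Fin l, a ≠ b → Disjoint (S a) (S b))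
    (hgroup : ∀ (k : Fin r) (j : Fin m), w k j = 1 ↔ j ∈ S (g k)) :
    RestrictedTU w := by
  classical
  intro k f c hf hc
  set N := ((Matrix.fromRows w (Matrix.of fun (_ : Unit) (_ : Fin m) => (1 : ℤ))).submatrix f c)
    with hNdef
  have hNinl : ∀ (i : Fin k) (a : Fin r), f i = Sum.inl a → ∀ j, N i j = w a (c j) := by
    intro i a ha j
    simp [hNdef, ha]
  have hNinr : ∀ (i : Fin k), f i = Sum.inr () → ∀ j, N i j = 1 := by
    intro i hi j
    simp [hNdef, hi]
  -- rows in the same group are equal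
  have hwe : ∀ a b : Fin r, g a = g b → w a = w b := by
    intro a b hab
    funext j
    by_cases hj : j ∈ S (g a)
    · have hj' : j ∈ S (g b) := by rw [← hab]; exact hj
      rw [(hgroup a j).mpr hj, (hgroup b j).mpr hj']
    · have h1 : w a j = 0 := (h01 a j).resolve_right (fun h => hj ((hgroup a j).mp h))
      have h2 : w b j = 0 := (h01 b j).resolve_right
        (fun h => hj (by rw [hab]; exact (hgroup b j).mp h))
      rw [h1, h2]
  by_cases hdup : ∃ i i' : Fin k, i ≠ i' ∧ N i = N i'
  · obtain ⟨i, i', hne, he⟩ := hdup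
    exact Or.inl (Matrix.det_zero_of_row_eq hne he)
  push_neg at hdup
  -- distinct selected `w`-rows lie in distinct groups
  have hgne : ∀ (i i' : Fin k) (a b : Fin r), i ≠ i' → f i = Sum.inl a → f i' = Sum.inl b →
      g a ≠ g b := by
    intro i i' a b hne ha hb hgab
    apply hdup i i' hne
    funext j
    rw [hNinl i a ha j, hNinl i' b hb j, hwe a b hgab]
  -- distinct selected `w`-rows have disjoint supports
  have hkey : ∀ (i i' : Fin k) (a b : Fin r), i ≠ i' → f i = Sum.inl a → f i' = Sum.inl b →
      ∀ j, N i j = 0 ∨ N i' j = 0 := by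
    intro i i' a b hne ha hb j
    by_contra hno
    push_neg at hno
    have h1 : N i j = 1 := by
      rw [hNinl i a ha j] at hno ⊢; exact (h01 a (c j)).resolve_left hno.1
    have h2 : N i' j = 1 := by
      rw [hNinl i' b hb j] at hno ⊢; exact (h01 b (c j)).resolve_left hno.2
    have hm1 : c j ∈ S (g a) := (hgroup a (c j)).mp (by rw [← hNinl i a ha j]; exact h1)
    have hm2 : c j ∈ S (g b) := (hgroup b (c j)).mp (by rw [← hNinl i' b hb j]; exact h2)
    exact (Finset.disjoint_left.mp (hdisj (g a) (g b) (hgne i i' a b hne ha hb)) hm1) hm2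
  by_cases hone : ∃ i0 : Fin k, f i0 = Sum.inr ()
  · obtain ⟨i0, hi0⟩ := hone
    have hA : ∀ i : Fin k, i ≠ i0 → ∃ a, f i = Sum.inl a := by
      intro i hi
      cases hfi : f i with
      | inl a => exact ⟨a, rfl⟩
      | inr u =>
        cases u
        exact absurd (hf (hfi.trans hi0.symm)) hi
    set e : Fin k → ℤ := fun j => 1 - ∑ i ∈ Finset.univ.erase i0, N i j with hedef
    -- column sums of the other rows are 0 or 1
    have hterm01 : ∀ j, ∀ i ∈ Finset.univ.erase i0, N i j = 0 ∨ N i j = 1 := by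
      intro j i hi
      obtain ⟨a, ha⟩ := hA i (Finset.mem_erase.mp hi).1
      rw [hNinl i a ha j]
      exact h01 a (c j)
    have htermuniq : ∀ j, ∀ i ∈ Finset.univ.erase i0, ∀ i' ∈ Finset.univ.erase i0,
        N i j = 1 → N i' j = 1 → i = i' := by
      intro j i hi i' hi' h1 h2
      by_contra hne
      obtain ⟨a, ha⟩ := hA i (Finset.mem_erase.mp hi).1
      obtain ⟨b, hb⟩ := hA i' (Finset.mem_erase.mp hi').1
      rcases hkey i i' a b hne ha hb j with h | h
      · rw [h1] at h; exact one_ne_zero h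
      · rw [h2] at h; exact one_ne_zero h
    have hs01 : ∀ j, (∑ i ∈ Finset.univ.erase i0, N i j) = 0 ∨
        (∑ i ∈ Finset.univ.erase i0, N i j) = 1 := fun j =>
      sum01 _ _ (hterm01 j) (htermuniq j)
    have he01 : ∀ j, e j = 0 ∨ e j = 1 := by
      intro j
      have hs := hs01 j
      simp only [hedef]
      omega
    have hedisj : ∀ j, ∀ i ∈ Finset.univ.erase i0, N i j = 1 → e j = 0 := by
      intro j i hi h1
      have hle : (1 : ℤ) ≤ ∑ i ∈ Finset.univ.erase i0, N i j := by
        rw [← h1]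
        refine Finset.single_le_sum (f := fun i => N i j) (fun i hi => ?_) hi
        rcases hterm01 j i hi with h | h <;> simp [h]
      have hs := hs01 j
      simp only [hedef]
      omega
    -- decompose the determinant
    have hNdec : N = N.updateRow i0 (e + ∑ i ∈ Finset.univ.erase i0, N i) := by
      ext i j
      by_cases h : i = i0
      · subst h
        rw [Matrix.updateRow_self]
        have : N i j = 1 := hNinr i hi0 j
        rw [this]
        simp only [Pi.add_apply, hedef]
        rw [Finset.sum_apply (g := fun i => N i)]
        ring
      · rw [Matrix.updateRow_ne h]
    have hdet : N.det = (N.updateRow i0 e).det := by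
      conv_lhs => rw [hNdec]
      rw [Matrix.det_updateRow_add, det_updateRow_finsetSum (v := fun i => N i), Finset.sum_eq_zero, add_zero]
      intro i hi
      have hne : i ≠ i0 := (Finset.mem_erase.mp hi).1
      refine Matrix.det_zero_of_row_eq hne.symm ?_
      rw [Matrix.updateRow_self, Matrix.updateRow_ne hne]
    rw [hdet]
    apply detLemma
    · intro i j
      by_cases h : i = i0
      · subst h; rw [Matrix.updateRow_self]; exact he01 j
      · rw [Matrix.updateRow_ne h]
        exact hterm01 j i (Finset.mem_erase.mpr ⟨h, Finset.mem_univ i⟩)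
    · intro i i' hne j
      by_cases h : i = i0
      · have hi' : i' ≠ i0 := fun he => hne (h.trans he.symm)
        rw [h, Matrix.updateRow_self, Matrix.updateRow_ne hi']
        rcases hterm01 j i' (Finset.mem_erase.mpr ⟨hi', Finset.mem_univ i'⟩) with h | h
        · exact Or.inr h
        · exact Or.inl (hedisj j i' (Finset.mem_erase.mpr ⟨hi', Finset.mem_univ i'⟩) h)
      · by_cases h' : i' = i0
        · rw [h', Matrix.updateRow_self, Matrix.updateRow_ne h]
          rcases hterm01 j i (Finset.mem_erase.mpr ⟨h, Finset.mem_univ i⟩) with hh | hh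
          · exact Or.inl hh
          · exact Or.inr (hedisj j i (Finset.mem_erase.mpr ⟨h, Finset.mem_univ i⟩) hh)
        · rw [Matrix.updateRow_ne h, Matrix.updateRow_ne h']
          obtain ⟨a, ha⟩ := hA i h
          obtain ⟨b, hb⟩ := hA i' h'
          exact hkey i i' a b hne ha hb j
  · -- no all-ones row selected
    push_neg at hone
    have hA : ∀ i : Fin k, ∃ a, f i = Sum.inl a := by
      intro i
      cases hfi : f i with
      | inl a => exact ⟨a, rfl⟩
      | inr u => cases u; exact absurd hfi (hone i)
    apply detLemma
    · intro i j
      obtain ⟨a, ha⟩ := hA i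
      rw [hNinl i a ha j]
      exact h01 a (c j)
    · intro i i' hne j
      obtain ⟨a, ha⟩ := hA i
      obtain ⟨b, hb⟩ := hA i'
      exact hkey i i' a b hne ha hb j
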